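/- (Anti-concentration for the image of a fixed vector) Fix M ≥ 1 and constants c₂, C₄ > 0. Let Y(z) be the Mn×Mn translated cyclic linearization built from M independent n×n random matrices with independent centered entries having second moments ≥ c₂ and fourth moments ≤ C₄. Then there is a constant c = c(c₂,C₄,M) > 0 such that for every fixed z ∈ ℂ, unit vector u ∈ ℂ^{Mn}, and fixed vector w ∈ ℂ^{Mn}: P( ‖Y(z)u − w‖₂ ≤ c√n ) = O_{C₄,c₂}(exp(−cn)). -/

import Mathlib

open MeasureTheory ProbabilityTheory

noncomputable def euclNorm {ι : Type*} [Fintype ι] (v : ι → ℂ) : ℝ :=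
  Real.sqrt (∑ i, ‖v i‖ ^ 2)

noncomputable def opNorm {ι κ : Type*} [Fintype ι] [Fintype κ] (A : Matrix ι κ ℂ) : ℝ :=
  sSup ((fun v => euclNorm (A.mulVec v)) '' {v | euclNorm v ≤ 1})

noncomputable def sMin {ι κ : Type*} [Fintype ι] [Fintype κ] (A : Matrix ι κ ℂ) : ℝ :=
  sInf ((fun v => euclNorm (A.mulVec v)) '' {v | euclNorm v = 1})

/-- The `Mn × Mn` cyclic block linearization matrix with `X k` in block `(k, k+1)`
(indices mod `M`). -/
def cyclicY (M n : ℕ) (X : Fin M → Matrix (Fin n) (Fin n) ℂ) :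
    Matrix (Fin M × Fin n) (Fin M × Fin n) ℂ :=
  fun p q => if q.1.val = (p.1.val + 1) % M then X p.1 p.2 q.2 else 0

/-- The translated linearization `Y(z) = Y - z I`. -/
noncomputable def Ymat (M n : ℕ) (X : Fin M → Matrix (Fin n) (Fin n) ℂ) (z : ℂ) :
    Matrix (Fin M × Fin n) (Fin M × Fin n) ℂ :=
  cyclicY M n X - z • (1 : Matrix (Fin M × Fin n) (Fin M × Fin n) ℂ)

def sparseSet {ι : Type*} [Fintype ι] (a : ℝ) : Set (ι → ℂ) :=
  {x | ∃ s : Finset ι, (∀ i ∉ s, x i = 0) ∧ (s.card : ℝ) ≤ a * (Fintype.card ι)}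

noncomputable def compSet {ι : Type*} [Fintype ι] (a b : ℝ) : Set (ι → ℂ) :=
  {x | euclNorm x = 1 ∧ ∃ y ∈ sparseSet a, euclNorm (x - y) ≤ b}

noncomputable def incompSet {ι : Type*} [Fintype ι] (a b : ℝ) : Set (ι → ℂ) :=
  {x | euclNorm x = 1 ∧ x ∉ compSet a b}

noncomputable def distToSpan {ι : Type*} [Fintype ι] (x : ι → ℂ) (S : Set (ι → ℂ)) : ℝ :=
  sInf ((fun y => euclNorm (x - y)) '' (Submodule.span ℂ S : Set (ι → ℂ)))


section AntiConcentrationAux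

open Finset

variable {Ω : Type} [MeasurableSpace Ω] {μ : Measure Ω}

local notation "K" => starRingEnd ℂ

lemma measurable_conj' : Measurable (fun z : ℂ => (starRingEnd ℂ) z) :=
  Complex.continuous_conj.measurable

lemma pow_le_one_add_pow_four {x : ℝ} (hx : 0 ≤ x) {d : ℕ} (hd : d ≤ 4) : x ^ d ≤ 1 + x ^ 4 := by
  rcases le_total x 1 with h | h
  · have : x ^ d ≤ 1 := pow_le_one₀ hx h
    nlinarith [pow_nonneg hx 4]
  · have : x ^ d ≤ x ^ 4 := pow_le_pow_right₀ h hd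
    linarith

lemma sq_integral_le [IsProbabilityMeasure μ] {g : Ω → ℝ} (h1 : Integrable g μ)
    (h2 : Integrable (fun ω => g ω ^ 2) μ) :
    (∫ ω, g ω ∂μ) ^ 2 ≤ ∫ ω, g ω ^ 2 ∂μ := by
  set m := ∫ ω, g ω ∂μ with hm
  have hsub : Integrable (fun ω => g ω ^ 2 - 2 * m * g ω) μ := h2.sub (h1.const_mul _)
  have h0 : 0 ≤ ∫ ω, (g ω - m) ^ 2 ∂μ := integral_nonneg fun ω => sq_nonneg _
  have he : ∫ ω, (g ω - m) ^ 2 ∂μ = ∫ ω, g ω ^ 2 ∂μ - m ^ 2 := by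
    have h1' : ∫ ω, (g ω - m) ^ 2 ∂μ = ∫ ω, (g ω ^ 2 - 2 * m * g ω + m ^ 2) ∂μ := by
      apply integral_congr_ae; filter_upwards with ω; ring
    rw [h1', integral_add hsub (integrable_const _), integral_sub h2 (h1.const_mul _),
      integral_const_mul, integral_const]
    simp only [Measure.real, measure_univ, ENNReal.toReal_one, smul_eq_mul, one_mul, ← hm]
    ring
  nlinarith [h0, he]

theorem ProbabilityTheory.IndepFun.integral_mul_complex {X Y : Ω → ℂ} (h : IndepFun X Y μ)
    (hX : Integrable X μ) (hY : Integrable Y μ) :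
    ∫ ω, X ω * Y ω ∂μ = (∫ ω, X ω ∂μ) * ∫ ω, Y ω ∂μ := by
  have hXY : Integrable (fun ω => X ω * Y ω) μ := h.integrable_mul hX hY
  have hrr : IndepFun (fun ω => (X ω).re) (fun ω => (Y ω).re) μ :=
    h.comp Complex.measurable_re Complex.measurable_re
  have hri : IndepFun (fun ω => (X ω).re) (fun ω => (Y ω).im) μ :=
    h.comp Complex.measurable_re Complex.measurable_im
  have hir : IndepFun (fun ω => (X ω).im) (fun ω => (Y ω).re) μ :=
    h.comp Complex.measurable_im Complex.measurable_re
  have hii : IndepFun (fun ω => (X ω).im) (fun ω => (Y ω).im) μ :=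
    h.comp Complex.measurable_im Complex.measurable_im
  have hXr : Integrable (fun ω => (X ω).re) μ := hX.re
  have hXi : Integrable (fun ω => (X ω).im) μ := hX.im
  have hYr : Integrable (fun ω => (Y ω).re) μ := hY.re
  have hYi : Integrable (fun ω => (Y ω).im) μ := hY.im
  have i1 : Integrable (fun ω => (X ω).re * (Y ω).re) μ := hrr.integrable_mul hXr hYr
  have i2 : Integrable (fun ω => (X ω).im * (Y ω).im) μ := hii.integrable_mul hXi hYi
  have i3 : Integrable (fun ω => (X ω).re * (Y ω).im) μ := hri.integrable_mul hXr hYi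
  have i4 : Integrable (fun ω => (X ω).im * (Y ω).re) μ := hir.integrable_mul hXi hYr
  have e1 : ∫ ω, (X ω).re * (Y ω).re ∂μ = (∫ ω, (X ω).re ∂μ) * ∫ ω, (Y ω).re ∂μ :=
    hrr.integral_fun_mul_eq_mul_integral hXr.aestronglyMeasurable hYr.aestronglyMeasurable
  have e2 : ∫ ω, (X ω).im * (Y ω).im ∂μ = (∫ ω, (X ω).im ∂μ) * ∫ ω, (Y ω).im ∂μ :=
    hii.integral_fun_mul_eq_mul_integral hXi.aestronglyMeasurable hYi.aestronglyMeasurable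
  have e3 : ∫ ω, (X ω).re * (Y ω).im ∂μ = (∫ ω, (X ω).re ∂μ) * ∫ ω, (Y ω).im ∂μ :=
    hri.integral_fun_mul_eq_mul_integral hXr.aestronglyMeasurable hYi.aestronglyMeasurable
  have e4 : ∫ ω, (X ω).im * (Y ω).re ∂μ = (∫ ω, (X ω).im ∂μ) * ∫ ω, (Y ω).re ∂μ :=
    hir.integral_fun_mul_eq_mul_integral hXi.aestronglyMeasurable hYr.aestronglyMeasurable
  have hre : ∀ (f : Ω → ℂ), Integrable f μ → (∫ ω, f ω ∂μ).re = ∫ ω, (f ω).re ∂μ := by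
    intro f hf
    rw [← RCLike.re_eq_complex_re, ← integral_re hf]
  have him : ∀ (f : Ω → ℂ), Integrable f μ → (∫ ω, f ω ∂μ).im = ∫ ω, (f ω).im ∂μ := by
    intro f hf
    rw [← RCLike.im_eq_complex_im, ← integral_im hf]
  apply Complex.ext
  · rw [hre _ hXY]
    have hcongr : ∫ ω, (X ω * Y ω).re ∂μ
        = ∫ ω, ((X ω).re * (Y ω).re - (X ω).im * (Y ω).im) ∂μ := by
      apply integral_congr_ae; filter_upwards with ω; simp [Complex.mul_re]
    rw [hcongr, integral_sub i1 i2, e1, e2]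
    simp [Complex.mul_re, hre _ hX, hre _ hY, him _ hX, him _ hY]
  · rw [him _ hXY]
    have hcongr : ∫ ω, (X ω * Y ω).im ∂μ
        = ∫ ω, ((X ω).re * (Y ω).im + (X ω).im * (Y ω).re) ∂μ := by
      apply integral_congr_ae; filter_upwards with ω; simp [Complex.mul_im]
    rw [hcongr, integral_add i3 i4, e3, e4]
    simp [Complex.mul_im, hre _ hX, hre _ hY, him _ hX, him _ hY]

lemma integrable_norm_pow_four [IsProbabilityMeasure μ] {f : Ω → ℂ} (hf : MemLp f 4 μ) :
    Integrable (fun ω => ‖f ω‖ ^ (4 : ℕ)) μ := by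
  have h := hf.integrable_norm_rpow (by norm_num) (by norm_num)
  have he : (fun ω => ‖f ω‖ ^ ((4 : ENNReal).toReal)) = fun ω => ‖f ω‖ ^ (4 : ℕ) := by
    funext ω
    rw [show ((4 : ENNReal).toReal) = ((4 : ℕ) : ℝ) by norm_num, Real.rpow_natCast]
  rwa [he] at h

lemma integrable_pow_conj_pow [IsProbabilityMeasure μ] {f : Ω → ℂ} (hm : Measurable f)
    (hf : MemLp f 4 μ) {a b : ℕ} (hab : a + b ≤ 4) :
    Integrable (fun ω => f ω ^ a * (starRingEnd ℂ) (f ω) ^ b) μ := by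
  have h4 : Integrable (fun ω => ‖f ω‖ ^ (4 : ℕ)) μ := integrable_norm_pow_four hf
  have hbd : Integrable (fun ω => 1 + ‖f ω‖ ^ (4 : ℕ)) μ := (integrable_const _).add h4
  apply Integrable.mono' hbd
  · exact ((hm.pow_const a).mul
      ((measurable_conj'.comp hm).pow_const b)).aestronglyMeasurable
  · filter_upwards with ω
    have : ‖f ω ^ a * (starRingEnd ℂ) (f ω) ^ b‖ = ‖f ω‖ ^ (a + b) := by
      simp [norm_mul, norm_pow, pow_add]
    rw [this]
    exact pow_le_one_add_pow_four (norm_nonneg _) hab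


lemma integral_complex_re {f : Ω → ℂ} (hf : Integrable f μ) :
    ∫ ω, (f ω).re ∂μ = (∫ ω, f ω ∂μ).re := by
  rw [← RCLike.re_eq_complex_re, ← integral_re hf]

lemma ofReal_norm_sq (z : ℂ) : ((‖z‖ ^ 2 : ℝ) : ℂ) = z * K z := by
  rw [Complex.mul_conj]
  norm_cast
  rw [Complex.normSq_eq_norm_sq]

lemma ofReal_norm_four (z : ℂ) : ((‖z‖ ^ 4 : ℝ) : ℂ) = z ^ 2 * K z ^ 2 := by
  have h : ((‖z‖ ^ 4 : ℝ) : ℂ) = (((‖z‖ ^ 2 : ℝ) : ℂ)) ^ 2 := by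
    norm_cast; ring
  rw [h, ofReal_norm_sq]; ring
lemma expand_moments [IsProbabilityMeasure μ] {W x : Ω → ℂ}
    (hWm : Measurable W) (hxm : Measurable x)
    (hW4 : MemLp W 4 μ) (hx4 : MemLp x 4 μ) (hWx : IndepFun W x μ)
    (hW0 : ∫ ω, W ω ∂μ = 0) (hx0 : ∫ ω, x ω ∂μ = 0) :
    (∫ ω, ‖W ω + x ω‖ ^ 2 ∂μ = ∫ ω, ‖W ω‖ ^ 2 ∂μ + ∫ ω, ‖x ω‖ ^ 2 ∂μ) ∧
    (∫ ω, ‖W ω + x ω‖ ^ 4 ∂μ ≤ ∫ ω, ‖W ω‖ ^ 4 ∂μ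
      + 6 * (∫ ω, ‖W ω‖ ^ 2 ∂μ) * (∫ ω, ‖x ω‖ ^ 2 ∂μ) + ∫ ω, ‖x ω‖ ^ 4 ∂μ) := by
  have iW : ∀ a b : ℕ, a + b ≤ 4 → Integrable (fun ω => W ω ^ a * K (W ω) ^ b) μ :=
    fun a b h => integrable_pow_conj_pow hWm hW4 h
  have ix : ∀ a b : ℕ, a + b ≤ 4 → Integrable (fun ω => x ω ^ a * K (x ω) ^ b) μ :=
    fun a b h => integrable_pow_conj_pow hxm hx4 h
  have iW1 : Integrable W μ := by simpa using iW 1 0 (by norm_num)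
  have ix1 : Integrable x μ := by simpa using ix 1 0 (by norm_num)
  have iWc : Integrable (fun ω => K (W ω)) μ := by simpa using iW 0 1 (by norm_num)
  have ixc : Integrable (fun ω => K (x ω)) μ := by simpa using ix 0 1 (by norm_num)
  have iW2 : Integrable (fun ω => W ω ^ 2) μ := by simpa using iW 2 0 (by norm_num)
  have ix2 : Integrable (fun ω => x ω ^ 2) μ := by simpa using ix 2 0 (by norm_num)
  have iWc2 : Integrable (fun ω => K (W ω) ^ 2) μ := by simpa using iW 0 2 (by norm_num)
  have ixc2 : Integrable (fun ω => K (x ω) ^ 2) μ := by simpa using ix 0 2 (by norm_num)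
  have iWW : Integrable (fun ω => W ω * K (W ω)) μ := by simpa using iW 1 1 (by norm_num)
  have ixx : Integrable (fun ω => x ω * K (x ω)) μ := by simpa using ix 1 1 (by norm_num)
  have iW2c : Integrable (fun ω => W ω ^ 2 * K (W ω)) μ := by
    simpa using iW 2 1 (by norm_num)
  have ix2c : Integrable (fun ω => x ω ^ 2 * K (x ω)) μ := by
    simpa using ix 2 1 (by norm_num)
  have iW1c2 : Integrable (fun ω => W ω * K (W ω) ^ 2) μ := by
    simpa using iW 1 2 (by norm_num)
  have ix1c2 : Integrable (fun ω => x ω * K (x ω) ^ 2) μ := by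
    simpa using ix 1 2 (by norm_num)
  have iW22 : Integrable (fun ω => W ω ^ 2 * K (W ω) ^ 2) μ := iW 2 2 (by norm_num)
  have ix22 : Integrable (fun ω => x ω ^ 2 * K (x ω) ^ 2) μ := ix 2 2 (by norm_num)
  have hWc0 : ∫ ω, K (W ω) ∂μ = 0 := by rw [integral_conj, hW0]; simp
  have hxc0 : ∫ ω, K (x ω) ∂μ = 0 := by rw [integral_conj, hx0]; simp
  have ind : ∀ (φ ψ : ℂ → ℂ), Measurable φ → Measurable ψ →
      IndepFun (fun ω => φ (W ω)) (fun ω => ψ (x ω)) μ := fun φ ψ hφ hψ => hWx.comp hφ hψ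
  have mid : Measurable (fun z : ℂ => z) := measurable_id
  have m2 : Measurable (fun z : ℂ => z ^ 2) := mid.pow_const 2
  have mc : Measurable (fun z : ℂ => K z) := measurable_conj'
  have mc2 : Measurable (fun z : ℂ => K z ^ 2) := mc.pow_const 2
  have m11 : Measurable (fun z : ℂ => z * K z) := mid.mul mc
  have m21 : Measurable (fun z : ℂ => z ^ 2 * K z) := m2.mul mc
  have m12 : Measurable (fun z : ℂ => z * K z ^ 2) := mid.mul mc2
  have cW : ((∫ ω, ‖W ω‖ ^ 2 ∂μ : ℝ) : ℂ) = ∫ ω, W ω * K (W ω) ∂μ := by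
    have h0 : ((∫ ω, ‖W ω‖ ^ 2 ∂μ : ℝ) : ℂ) = ∫ ω, ((‖W ω‖ ^ 2 : ℝ) : ℂ) ∂μ :=
      integral_ofReal.symm
    rw [h0]; apply integral_congr_ae; filter_upwards with ω; exact ofReal_norm_sq _
  have cx : ((∫ ω, ‖x ω‖ ^ 2 ∂μ : ℝ) : ℂ) = ∫ ω, x ω * K (x ω) ∂μ := by
    have h0 : ((∫ ω, ‖x ω‖ ^ 2 ∂μ : ℝ) : ℂ) = ∫ ω, ((‖x ω‖ ^ 2 : ℝ) : ℂ) ∂μ :=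
      integral_ofReal.symm
    rw [h0]; apply integral_congr_ae; filter_upwards with ω; exact ofReal_norm_sq _
  -- Part 1
  have part1 : ∫ ω, ‖W ω + x ω‖ ^ 2 ∂μ = ∫ ω, ‖W ω‖ ^ 2 ∂μ + ∫ ω, ‖x ω‖ ^ 2 ∂μ := by
    have cast2 : ((∫ ω, ‖W ω + x ω‖ ^ 2 ∂μ : ℝ) : ℂ)
        = ∫ ω, (W ω + x ω) * K (W ω + x ω) ∂μ := by
      have h0 : ((∫ ω, ‖W ω + x ω‖ ^ 2 ∂μ : ℝ) : ℂ)
          = ∫ ω, ((‖W ω + x ω‖ ^ 2 : ℝ) : ℂ) ∂μ := integral_ofReal.symm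
      rw [h0]; apply integral_congr_ae; filter_upwards with ω; exact ofReal_norm_sq _
    have iwx : Integrable (fun ω => W ω * K (x ω)) μ :=
      (ind _ _ mid mc).integrable_mul iW1 ixc
    have ixw : Integrable (fun ω => x ω * K (W ω)) μ :=
      ((ind _ _ mc mid).symm).integrable_mul ix1 iWc
    have ha2 : Integrable (fun ω => x ω * K (W ω) + x ω * K (x ω)) μ := ixw.add ixx
    have ha1 : Integrable (fun ω => W ω * K (x ω) + (x ω * K (W ω) + x ω * K (x ω))) μ :=
      iwx.add ha2
    have hexp : ∫ ω, (W ω + x ω) * K (W ω + x ω) ∂μ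
        = ∫ ω, (W ω * K (W ω) + (W ω * K (x ω) + (x ω * K (W ω) + x ω * K (x ω)))) ∂μ := by
      apply integral_congr_ae; filter_upwards with ω
      rw [map_add]; ring
    have hsplit : ∫ ω, (W ω * K (W ω) + (W ω * K (x ω) + (x ω * K (W ω) + x ω * K (x ω)))) ∂μ
        = ∫ ω, W ω * K (W ω) ∂μ + (∫ ω, W ω * K (x ω) ∂μ
          + (∫ ω, x ω * K (W ω) ∂μ + ∫ ω, x ω * K (x ω) ∂μ)) := by
      rw [integral_add iWW ha1, integral_add iwx ha2, integral_add ixw ixx]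
    have hv1 : ∫ ω, W ω * K (x ω) ∂μ = 0 := by
      rw [(ind _ _ mid mc).integral_mul_complex iW1 ixc, hW0]; ring
    have hv2 : ∫ ω, x ω * K (W ω) ∂μ = 0 := by
      rw [((ind _ _ mc mid).symm).integral_mul_complex ix1 iWc, hWc0]; ring
    have : ((∫ ω, ‖W ω + x ω‖ ^ 2 ∂μ : ℝ) : ℂ)
        = ((∫ ω, ‖W ω‖ ^ 2 ∂μ : ℝ) : ℂ) + ((∫ ω, ‖x ω‖ ^ 2 ∂μ : ℝ) : ℂ) := by
      rw [cast2, hexp, hsplit, hv1, hv2, cW, cx]; ring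
    exact_mod_cast this
  refine ⟨part1, ?_⟩
  -- Part 2
  set T1 : Ω → ℂ := fun ω => (W ω ^ 2 * K (W ω) ^ 2) * 1 with hT1
  set T2 : Ω → ℂ := fun ω => (W ω ^ 2 * K (W ω)) * (2 * K (x ω)) with hT2
  set T3 : Ω → ℂ := fun ω => (W ω ^ 2) * (K (x ω) ^ 2) with hT3
  set T4 : Ω → ℂ := fun ω => (W ω * K (W ω) ^ 2) * (2 * x ω) with hT4
  set T5 : Ω → ℂ := fun ω => (W ω * K (W ω)) * (4 * (x ω * K (x ω))) with hT5
  set T6 : Ω → ℂ := fun ω => W ω * (2 * (x ω * K (x ω) ^ 2)) with hT6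
  set T7 : Ω → ℂ := fun ω => (K (W ω) ^ 2) * (x ω ^ 2) with hT7
  set T8 : Ω → ℂ := fun ω => (K (W ω)) * (2 * (x ω ^ 2 * K (x ω))) with hT8
  set T9 : Ω → ℂ := fun ω => x ω ^ 2 * K (x ω) ^ 2 with hT9
  have i1 : Integrable T1 μ := by simpa [hT1] using iW22
  have i2 : Integrable T2 μ :=
    (ind _ _ m21 (mc.const_mul 2)).integrable_mul iW2c (ixc.const_mul 2)
  have i3 : Integrable T3 μ := (ind _ _ m2 mc2).integrable_mul iW2 ixc2
  have i4 : Integrable T4 μ :=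
    (ind _ _ m12 (mid.const_mul 2)).integrable_mul iW1c2 (ix1.const_mul 2)
  have i5 : Integrable T5 μ :=
    (ind _ _ m11 (m11.const_mul 4)).integrable_mul iWW (ixx.const_mul 4)
  have i6 : Integrable T6 μ :=
    (ind _ _ mid (m12.const_mul 2)).integrable_mul iW1 (ix1c2.const_mul 2)
  have i7 : Integrable T7 μ := (ind _ _ mc2 m2).integrable_mul iWc2 ix2
  have i8 : Integrable T8 μ :=
    (ind _ _ mc (m21.const_mul 2)).integrable_mul iWc (ix2c.const_mul 2)
  have i9 : Integrable T9 μ := ix22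
  have j8 : Integrable (fun ω => T8 ω + T9 ω) μ := i8.add i9
  have j7 : Integrable (fun ω => T7 ω + (T8 ω + T9 ω)) μ := i7.add j8
  have j6 : Integrable (fun ω => T6 ω + (T7 ω + (T8 ω + T9 ω))) μ := i6.add j7
  have j5 : Integrable (fun ω => T5 ω + (T6 ω + (T7 ω + (T8 ω + T9 ω)))) μ := i5.add j6
  have j4 : Integrable (fun ω => T4 ω + (T5 ω + (T6 ω + (T7 ω + (T8 ω + T9 ω))))) μ := i4.add j5
  have j3 : Integrable (fun ω => T3 ω + (T4 ω + (T5 ω + (T6 ω + (T7 ω + (T8 ω + T9 ω)))))) μ :=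
    i3.add j4
  have j2 : Integrable
      (fun ω => T2 ω + (T3 ω + (T4 ω + (T5 ω + (T6 ω + (T7 ω + (T8 ω + T9 ω))))))) μ :=
    i2.add j3
  have cast4 : ((∫ ω, ‖W ω + x ω‖ ^ 4 ∂μ : ℝ) : ℂ)
      = ∫ ω, (W ω + x ω) ^ 2 * K (W ω + x ω) ^ 2 ∂μ := by
    have h0 : ((∫ ω, ‖W ω + x ω‖ ^ 4 ∂μ : ℝ) : ℂ)
        = ∫ ω, ((‖W ω + x ω‖ ^ 4 : ℝ) : ℂ) ∂μ := integral_ofReal.symm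
    rw [h0]; apply integral_congr_ae; filter_upwards with ω; exact ofReal_norm_four _
  have hexp : ∫ ω, (W ω + x ω) ^ 2 * K (W ω + x ω) ^ 2 ∂μ
      = ∫ ω, (T1 ω + (T2 ω + (T3 ω + (T4 ω + (T5 ω + (T6 ω + (T7 ω + (T8 ω + T9 ω)))))))) ∂μ := by
    apply integral_congr_ae; filter_upwards with ω
    simp only [hT1, hT2, hT3, hT4, hT5, hT6, hT7, hT8, hT9]
    rw [map_add]; ring
  have hsplit : ∫ ω, (T1 ω + (T2 ω + (T3 ω + (T4 ω + (T5 ω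
        + (T6 ω + (T7 ω + (T8 ω + T9 ω)))))))) ∂μ
      = ∫ ω, T1 ω ∂μ + (∫ ω, T2 ω ∂μ + (∫ ω, T3 ω ∂μ + (∫ ω, T4 ω ∂μ + (∫ ω, T5 ω ∂μ
        + (∫ ω, T6 ω ∂μ + (∫ ω, T7 ω ∂μ + (∫ ω, T8 ω ∂μ + ∫ ω, T9 ω ∂μ))))))) := by
    rw [integral_add i1 j2, integral_add i2 j3, integral_add i3 j4, integral_add i4 j5,
      integral_add i5 j6, integral_add i6 j7, integral_add i7 j8, integral_add i8 i9]
  have hv2 : ∫ ω, T2 ω ∂μ = 0 := by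
    rw [hT2, (ind _ _ m21 (mc.const_mul 2)).integral_mul_complex iW2c (ixc.const_mul 2)]
    rw [integral_const_mul, hxc0]; ring
  have hv4 : ∫ ω, T4 ω ∂μ = 0 := by
    rw [hT4, (ind _ _ m12 (mid.const_mul 2)).integral_mul_complex iW1c2 (ix1.const_mul 2)]
    rw [integral_const_mul, hx0]; ring
  have hv6 : ∫ ω, T6 ω ∂μ = 0 := by
    rw [hT6, (ind _ _ mid (m12.const_mul 2)).integral_mul_complex iW1 (ix1c2.const_mul 2), hW0]
    ring
  have hv8 : ∫ ω, T8 ω ∂μ = 0 := by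
    rw [hT8, (ind _ _ mc (m21.const_mul 2)).integral_mul_complex iWc (ix2c.const_mul 2), hWc0]
    ring
  have e3 : ∫ ω, T3 ω ∂μ = (∫ ω, W ω ^ 2 ∂μ) * K (∫ ω, x ω ^ 2 ∂μ) := by
    rw [hT3, (ind _ _ m2 mc2).integral_mul_complex iW2 ixc2]
    congr 1
    have h0 : ∫ ω, K (x ω) ^ 2 ∂μ = ∫ ω, K (x ω ^ 2) ∂μ := by
      apply integral_congr_ae; filter_upwards with ω; rw [map_pow]
    rw [h0, integral_conj]
  have e7 : ∫ ω, T7 ω ∂μ = K (∫ ω, W ω ^ 2 ∂μ) * (∫ ω, x ω ^ 2 ∂μ) := by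
    rw [hT7, (ind _ _ mc2 m2).integral_mul_complex iWc2 ix2]
    congr 1
    have h0 : ∫ ω, K (W ω) ^ 2 ∂μ = ∫ ω, K (W ω ^ 2) ∂μ := by
      apply integral_congr_ae; filter_upwards with ω; rw [map_pow]
    rw [h0, integral_conj]
  have e5 : ∫ ω, T5 ω ∂μ
      = 4 * (((∫ ω, ‖W ω‖ ^ 2 ∂μ : ℝ) : ℂ) * ((∫ ω, ‖x ω‖ ^ 2 ∂μ : ℝ) : ℂ)) := by
    rw [hT5, (ind _ _ m11 (m11.const_mul 4)).integral_mul_complex iWW (ixx.const_mul 4),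
      integral_const_mul, cW, cx]
    ring
  have e1 : ∫ ω, T1 ω ∂μ = ((∫ ω, ‖W ω‖ ^ 4 ∂μ : ℝ) : ℂ) := by
    have h0 : ((∫ ω, ‖W ω‖ ^ 4 ∂μ : ℝ) : ℂ) = ∫ ω, ((‖W ω‖ ^ 4 : ℝ) : ℂ) ∂μ :=
      integral_ofReal.symm
    rw [hT1, h0]
    apply integral_congr_ae; filter_upwards with ω
    rw [ofReal_norm_four]; ring
  have e9 : ∫ ω, T9 ω ∂μ = ((∫ ω, ‖x ω‖ ^ 4 ∂μ : ℝ) : ℂ) := by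
    have h0 : ((∫ ω, ‖x ω‖ ^ 4 ∂μ : ℝ) : ℂ) = ∫ ω, ((‖x ω‖ ^ 4 : ℝ) : ℂ) ∂μ :=
      integral_ofReal.symm
    rw [hT9, h0]
    apply integral_congr_ae; filter_upwards with ω
    rw [ofReal_norm_four]
  set q : ℂ := (∫ ω, W ω ^ 2 ∂μ) * K (∫ ω, x ω ^ 2 ∂μ) with hq
  have hKq : K q = K (∫ ω, W ω ^ 2 ∂μ) * (∫ ω, x ω ^ 2 ∂μ) := by
    rw [hq, map_mul]; simp
  have main : ((∫ ω, ‖W ω + x ω‖ ^ 4 ∂μ : ℝ) : ℂ)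
      = ((∫ ω, ‖W ω‖ ^ 4 ∂μ : ℝ) : ℂ)
        + 4 * (((∫ ω, ‖W ω‖ ^ 2 ∂μ : ℝ) : ℂ) * ((∫ ω, ‖x ω‖ ^ 2 ∂μ : ℝ) : ℂ))
        + ((∫ ω, ‖x ω‖ ^ 4 ∂μ : ℝ) : ℂ) + (q + K q) := by
    rw [cast4, hexp, hsplit, hv2, hv4, hv6, hv8, e1, e3, e5, e7, e9, hKq]; ring
  have hre : ∫ ω, ‖W ω + x ω‖ ^ 4 ∂μ
      = ∫ ω, ‖W ω‖ ^ 4 ∂μ + 4 * ((∫ ω, ‖W ω‖ ^ 2 ∂μ) * (∫ ω, ‖x ω‖ ^ 2 ∂μ))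
        + ∫ ω, ‖x ω‖ ^ 4 ∂μ + (q.re + q.re) := by
    have h := congrArg Complex.re main
    simpa [Complex.add_re, Complex.ofReal_re, Complex.conj_re, Complex.ofReal_mul,
      Complex.mul_re, Complex.ofReal_im] using h
  have hqbound : q.re ≤ (∫ ω, ‖W ω‖ ^ 2 ∂μ) * (∫ ω, ‖x ω‖ ^ 2 ∂μ) := by
    have h1 : q.re ≤ ‖q‖ := Complex.re_le_norm q
    have h2 : ‖q‖ = ‖∫ ω, W ω ^ 2 ∂μ‖ * ‖∫ ω, x ω ^ 2 ∂μ‖ := by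
      rw [hq, norm_mul]; congr 1; exact RCLike.norm_conj _
    have hW2n : ∫ ω, ‖W ω ^ 2‖ ∂μ = ∫ ω, ‖W ω‖ ^ 2 ∂μ := by
      apply integral_congr_ae; filter_upwards with ω; exact norm_pow _ _
    have hx2n : ∫ ω, ‖x ω ^ 2‖ ∂μ = ∫ ω, ‖x ω‖ ^ 2 ∂μ := by
      apply integral_congr_ae; filter_upwards with ω; exact norm_pow _ _
    have h3 : ‖∫ ω, W ω ^ 2 ∂μ‖ ≤ ∫ ω, ‖W ω‖ ^ 2 ∂μ :=
      le_trans (norm_integral_le_integral_norm _) (le_of_eq hW2n)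
    have h4 : ‖∫ ω, x ω ^ 2 ∂μ‖ ≤ ∫ ω, ‖x ω‖ ^ 2 ∂μ :=
      le_trans (norm_integral_le_integral_norm _) (le_of_eq hx2n)
    calc q.re ≤ ‖q‖ := h1
      _ = ‖∫ ω, W ω ^ 2 ∂μ‖ * ‖∫ ω, x ω ^ 2 ∂μ‖ := h2
      _ ≤ (∫ ω, ‖W ω‖ ^ 2 ∂μ) * (∫ ω, ‖x ω‖ ^ 2 ∂μ) :=
          mul_le_mul h3 h4 (norm_nonneg _) ((norm_nonneg _).trans h3)
  rw [hre]; nlinarith [hqbound]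
/-- Integrability of `‖f‖²` for `f ∈ L⁴` on a probability space. -/
lemma integrable_norm_pow_two [IsProbabilityMeasure μ] {f : Ω → ℂ} (hf : MemLp f 4 μ) :
    Integrable (fun ω => ‖f ω‖ ^ (2 : ℕ)) μ := by
  have hf2 : MemLp f 2 μ := hf.mono_exponent (by norm_num)
  have h := hf2.integrable_norm_rpow (by norm_num) (by norm_num)
  have he : (fun ω => ‖f ω‖ ^ ((2 : ENNReal).toReal)) = fun ω => ‖f ω‖ ^ (2 : ℕ) := by
    funext ω
    rw [show ((2 : ENNReal).toReal) = ((2 : ℕ) : ℝ) by norm_num, Real.rpow_natCast]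
  rwa [he] at h

/-- `∫‖f‖² ≤ √(∫‖f‖⁴)` bound in the form `∫‖f‖² ≤ √C` when `∫‖f‖⁴ ≤ C`. -/
lemma second_moment_le_sqrt [IsProbabilityMeasure μ] {f : Ω → ℂ} (hf : MemLp f 4 μ)
    {C : ℝ} (h4 : ∫ ω, ‖f ω‖ ^ 4 ∂μ ≤ C) :
    ∫ ω, ‖f ω‖ ^ 2 ∂μ ≤ Real.sqrt C := by
  have h2 : Integrable (fun ω => ‖f ω‖ ^ (2 : ℕ)) μ := integrable_norm_pow_two hf
  have h44 : Integrable (fun ω => (‖f ω‖ ^ (2 : ℕ)) ^ 2) μ := by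
    have := integrable_norm_pow_four hf
    apply this.congr
    filter_upwards with ω; ring
  have hsq := sq_integral_le h2 h44
  have h4' : ∫ ω, (‖f ω‖ ^ (2 : ℕ)) ^ 2 ∂μ = ∫ ω, ‖f ω‖ ^ 4 ∂μ := by
    apply integral_congr_ae; filter_upwards with ω; ring
  have hnn : 0 ≤ ∫ ω, ‖f ω‖ ^ 2 ∂μ := integral_nonneg fun ω => by positivity
  calc ∫ ω, ‖f ω‖ ^ 2 ∂μ = Real.sqrt ((∫ ω, ‖f ω‖ ^ 2 ∂μ) ^ 2) := (Real.sqrt_sq hnn).symm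
    _ ≤ Real.sqrt C := Real.sqrt_le_sqrt (by rw [h4', ← h4'] at hsq; linarith [hsq, h4'.le, h4])

lemma weighted_sum_moments [IsProbabilityMeasure μ] {n : ℕ} {C₄ : ℝ} (hC₄ : 0 < C₄)
    (ξ : Fin n → Ω → ℂ) (c : Fin n → ℂ)
    (hmeas : ∀ j, Measurable (ξ j)) (hL4 : ∀ j, MemLp (ξ j) 4 μ)
    (hcent : ∀ j, ∫ ω, ξ j ω ∂μ = 0) (hm4 : ∀ j, ∫ ω, ‖ξ j ω‖ ^ 4 ∂μ ≤ C₄)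
    (hindep : ∀ (s : Finset (Fin n)) (a : Fin n), a ∉ s →
      IndepFun (fun ω => ∑ j ∈ s, c j * ξ j ω) (ξ a) μ) :
    ∀ s : Finset (Fin n),
      (∫ ω, ∑ j ∈ s, c j * ξ j ω ∂μ = 0) ∧
      (∫ ω, ‖∑ j ∈ s, c j * ξ j ω‖ ^ 2 ∂μ = ∑ j ∈ s, ‖c j‖ ^ 2 * ∫ ω, ‖ξ j ω‖ ^ 2 ∂μ) ∧
      (∫ ω, ‖∑ j ∈ s, c j * ξ j ω‖ ^ 4 ∂μ ≤ 3 * C₄ * (∑ j ∈ s, ‖c j‖ ^ 2) ^ 2) := by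
  intro s
  induction s using Finset.induction_on with
  | empty => simp
  | @insert a s ha IH =>
    obtain ⟨IH0, IH2, IH4⟩ := IH
    set W : Ω → ℂ := fun ω => ∑ j ∈ s, c j * ξ j ω with hW
    set x : Ω → ℂ := fun ω => c a * ξ a ω with hx
    have hWm : Measurable W := by
      apply Finset.measurable_sum
      exact fun j _ => (hmeas j).const_mul (c j)
    have hxm : Measurable x := (hmeas a).const_mul (c a)
    have hW4 : MemLp W 4 μ := by
      have h := memLp_finset_sum' (μ := μ) (p := 4) s
        (f := fun j => fun ω => c j * ξ j ω) (fun j _ => (hL4 j).const_mul (c j))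
      apply MemLp.ae_eq _ h
      filter_upwards with ω
      rw [Finset.sum_apply]
    have hx4 : MemLp x 4 μ := (hL4 a).const_mul (c a)
    have hWx : IndepFun W x μ := by
      have h := (hindep s a ha).comp measurable_id (measurable_id.const_mul (c a))
      exact h
    have hx0 : ∫ ω, x ω ∂μ = 0 := by
      rw [hx]
      simp only [integral_const_mul, hcent a, mul_zero]
    have hEx : ∀ ω, ∑ j ∈ insert a s, c j * ξ j ω = W ω + x ω := by
      intro ω; rw [Finset.sum_insert ha]; ring
    have hiW1 : Integrable W μ := hW4.integrable (by norm_num)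
    have hix1 : Integrable x μ := hx4.integrable (by norm_num)
    obtain ⟨h2, h4⟩ := expand_moments hWm hxm hW4 hx4 hWx IH0 hx0
    -- moments of x
    have hEx2 : ∫ ω, ‖x ω‖ ^ 2 ∂μ = ‖c a‖ ^ 2 * ∫ ω, ‖ξ a ω‖ ^ 2 ∂μ := by
      rw [hx, ← integral_const_mul]
      apply integral_congr_ae; filter_upwards with ω
      rw [norm_mul, mul_pow]
    have hEx4 : ∫ ω, ‖x ω‖ ^ 4 ∂μ = ‖c a‖ ^ 4 * ∫ ω, ‖ξ a ω‖ ^ 4 ∂μ := by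
      rw [hx, ← integral_const_mul]
      apply integral_congr_ae; filter_upwards with ω
      rw [norm_mul, mul_pow]
    refine ⟨?_, ?_, ?_⟩
    · rw [show (fun ω => ∑ j ∈ insert a s, c j * ξ j ω) = fun ω => W ω + x ω from funext hEx,
        integral_add hiW1 hix1, IH0, hx0, add_zero]
    · have hcg : ∫ ω, ‖∑ j ∈ insert a s, c j * ξ j ω‖ ^ 2 ∂μ = ∫ ω, ‖W ω + x ω‖ ^ 2 ∂μ :=
        integral_congr_ae (by filter_upwards with ω; rw [hEx ω])
      rw [hcg, h2, IH2, hEx2, Finset.sum_insert ha]; ring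
    · have hcg : ∫ ω, ‖∑ j ∈ insert a s, c j * ξ j ω‖ ^ 4 ∂μ = ∫ ω, ‖W ω + x ω‖ ^ 4 ∂μ :=
        integral_congr_ae (by filter_upwards with ω; rw [hEx ω])
      rw [hcg]
      -- bounds
      have hm2j : ∀ j, ∫ ω, ‖ξ j ω‖ ^ 2 ∂μ ≤ Real.sqrt C₄ := fun j =>
        second_moment_le_sqrt (hL4 j) (hm4 j)
      have hm2jnn : ∀ j : Fin n, (0:ℝ) ≤ ∫ ω, ‖ξ j ω‖ ^ 2 ∂μ :=
        fun j => integral_nonneg fun ω => by positivity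
      set s1 : ℝ := ∑ j ∈ s, ‖c j‖ ^ 2 with hs1
      set r : ℝ := ‖c a‖ ^ 2 with hr
      have hs1nn : 0 ≤ s1 := Finset.sum_nonneg fun j _ => by positivity
      have hrnn : 0 ≤ r := by positivity
      have hE2W : ∫ ω, ‖W ω‖ ^ 2 ∂μ ≤ Real.sqrt C₄ * s1 := by
        rw [IH2, hs1, Finset.mul_sum]
        apply Finset.sum_le_sum
        intro j hj
        rw [mul_comm (Real.sqrt C₄)]
        exact mul_le_mul_of_nonneg_left (hm2j j) (by positivity)
      have hE2Wnn : 0 ≤ ∫ ω, ‖W ω‖ ^ 2 ∂μ := integral_nonneg fun ω => by positivity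
      have hE2x : ∫ ω, ‖x ω‖ ^ 2 ∂μ ≤ Real.sqrt C₄ * r := by
        rw [hEx2, mul_comm (Real.sqrt C₄)]
        exact mul_le_mul_of_nonneg_left (hm2j a) (by positivity)
      have hE2xnn : 0 ≤ ∫ ω, ‖x ω‖ ^ 2 ∂μ := integral_nonneg fun ω => by positivity
      have hE4x : ∫ ω, ‖x ω‖ ^ 4 ∂μ ≤ C₄ * r ^ 2 := by
        rw [hEx4, hr]
        have : (‖c a‖ ^ 2) ^ 2 = ‖c a‖ ^ 4 := by ring
        rw [← this]
        calc (‖c a‖ ^ 2) ^ 2 * ∫ ω, ‖ξ a ω‖ ^ 4 ∂μ ≤ (‖c a‖ ^ 2) ^ 2 * C₄ :=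
              mul_le_mul_of_nonneg_left (hm4 a) (by positivity)
          _ = C₄ * (‖c a‖ ^ 2) ^ 2 := by ring
      have hcross : (∫ ω, ‖W ω‖ ^ 2 ∂μ) * (∫ ω, ‖x ω‖ ^ 2 ∂μ) ≤ C₄ * (s1 * r) := by
        calc (∫ ω, ‖W ω‖ ^ 2 ∂μ) * (∫ ω, ‖x ω‖ ^ 2 ∂μ)
            ≤ (Real.sqrt C₄ * s1) * (Real.sqrt C₄ * r) :=
              mul_le_mul hE2W hE2x hE2xnn (le_trans hE2Wnn hE2W)
          _ = (Real.sqrt C₄ * Real.sqrt C₄) * (s1 * r) := by ring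
          _ = C₄ * (s1 * r) := by rw [Real.mul_self_sqrt hC₄.le]
      have hsum : ∑ j ∈ insert a s, ‖c j‖ ^ 2 = r + s1 := by
        rw [Finset.sum_insert ha]
      rw [hsum]
      nlinarith [h4, IH4, hE4x, hcross, hrnn, hs1nn, hC₄]
/-- Paley–Zygmund-type inequality. -/
lemma paley_zygmund [IsProbabilityMeasure μ] {Q : Ω → ℝ} (hQm : Measurable Q)
    (hQ0 : ∀ ω, 0 ≤ Q ω) (h1 : Integrable Q μ) (h2 : Integrable (fun ω => Q ω ^ 2) μ) :
    (∫ ω, Q ω ∂μ) ^ 2 ≤ 4 * (∫ ω, Q ω ^ 2 ∂μ) * (μ {ω | (∫ ω', Q ω' ∂μ) / 2 ≤ Q ω}).toReal := by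
  set m := ∫ ω, Q ω ∂μ with hm
  have hmnn : 0 ≤ m := integral_nonneg hQ0
  set A : Set Ω := {ω | m / 2 ≤ Q ω} with hA
  have hAmeas : MeasurableSet A := measurableSet_le measurable_const hQm
  set p : ℝ := (μ A).toReal with hp
  have hpnn : 0 ≤ p := ENNReal.toReal_nonneg
  have hQ2nn : 0 ≤ ∫ ω, Q ω ^ 2 ∂μ := integral_nonneg fun ω => sq_nonneg _
  -- ∫_{Aᶜ} Q ≤ m/2
  have hAc : ∫ ω in Aᶜ, Q ω ∂μ ≤ m / 2 := by
    have hb : ∀ ω ∈ Aᶜ, ‖Q ω‖ ≤ m / 2 := by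
      intro ω hω
      rw [Real.norm_of_nonneg (hQ0 ω)]
      exact le_of_not_ge hω
    have := norm_setIntegral_le_of_norm_le_const (μ := μ) (s := Aᶜ) (f := Q)
      (measure_lt_top μ _) hb
    have hle : ∫ ω in Aᶜ, Q ω ∂μ ≤ ‖∫ ω in Aᶜ, Q ω ∂μ‖ := le_abs_self _
    have hμc : (μ Aᶜ).toReal ≤ 1 := by
      have h := prob_le_one (μ := μ) (s := Aᶜ)
      have h2' := (ENNReal.toReal_le_toReal (measure_ne_top μ Aᶜ) ENNReal.one_ne_top).mpr h
      simpa using h2'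
    calc ∫ ω in Aᶜ, Q ω ∂μ ≤ ‖∫ ω in Aᶜ, Q ω ∂μ‖ := hle
      _ ≤ m / 2 * (μ Aᶜ).toReal := this
      _ ≤ m / 2 * 1 := by
          exact mul_le_mul_of_nonneg_left hμc (by linarith)
      _ = m / 2 := by ring
  have hsplit : ∫ ω in A, Q ω ∂μ + ∫ ω in Aᶜ, Q ω ∂μ = m := integral_add_compl hAmeas h1
  have hIA : m / 2 ≤ ∫ ω in A, Q ω ∂μ := by linarith
  -- Cauchy–Schwarz on A
  have hIAnn : 0 ≤ ∫ ω in A, Q ω ∂μ := integral_nonneg fun ω => hQ0 ω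
  by_cases hp0 : p = 0
  · -- then μ A = 0 and ∫_A Q = 0, so m ≤ 0, hence m = 0
    have hμA : μ A = 0 := by
      rw [hp] at hp0
      exact (ENNReal.toReal_eq_zero_iff _).mp hp0 |>.resolve_right (measure_ne_top μ A)
    have : ∫ ω in A, Q ω ∂μ = 0 := by
      rw [Measure.restrict_eq_zero.mpr hμA, integral_zero_measure]
    have hm0 : m = 0 := by linarith
    rw [hm0]
    nlinarith [hQ2nn, hpnn]
  · have hppos : 0 < p := lt_of_le_of_ne hpnn (Ne.symm hp0)
    -- (∫_A Q)² ≤ p * ∫_A Q²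
    have hCS : (∫ ω in A, Q ω ∂μ) ^ 2 ≤ p * ∫ ω in A, Q ω ^ 2 ∂μ := by
      set b : ℝ := (∫ ω in A, Q ω ∂μ) / p with hb
      have h1A : Integrable Q (μ.restrict A) := h1.restrict
      have h2A : Integrable (fun ω => Q ω ^ 2) (μ.restrict A) := h2.restrict
      have hsubA : Integrable (fun ω => Q ω ^ 2 - 2 * b * Q ω) (μ.restrict A) :=
        h2A.sub (h1A.const_mul _)
      have h0 : 0 ≤ ∫ ω in A, (Q ω - b) ^ 2 ∂μ := integral_nonneg fun ω => sq_nonneg _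
      have he : ∫ ω in A, (Q ω - b) ^ 2 ∂μ
          = ∫ ω in A, Q ω ^ 2 ∂μ - 2 * b * ∫ ω in A, Q ω ∂μ + b ^ 2 * p := by
        have h1' : ∫ ω in A, (Q ω - b) ^ 2 ∂μ
            = ∫ ω in A, (Q ω ^ 2 - 2 * b * Q ω + b ^ 2) ∂μ := by
          apply integral_congr_ae; filter_upwards with ω; ring
        rw [h1', integral_add hsubA (integrable_const _),
          integral_sub h2A (h1A.const_mul _), integral_const_mul, integral_const]
        rw [Measure.real, Measure.restrict_apply_univ]
        simp only [smul_eq_mul, ← hp]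
        ring
      rw [he, hb] at h0
      have hexpand : ∫ ω in A, Q ω ^ 2 ∂μ
          - (∫ ω in A, Q ω ∂μ) ^ 2 / p ≥ 0 := by
        have : 2 * ((∫ ω in A, Q ω ∂μ) / p) * ∫ ω in A, Q ω ∂μ
            - ((∫ ω in A, Q ω ∂μ) / p) ^ 2 * p = (∫ ω in A, Q ω ∂μ) ^ 2 / p := by
          field_simp; ring
        linarith [h0, this]
      have := mul_le_mul_of_nonneg_right (le_of_sub_nonneg hexpand)
        (le_of_lt hppos)
      calc (∫ ω in A, Q ω ∂μ) ^ 2 = (∫ ω in A, Q ω ∂μ) ^ 2 / p * p := by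
            field_simp
        _ ≤ (∫ ω in A, Q ω ^ 2 ∂μ) * p := this
        _ = p * ∫ ω in A, Q ω ^ 2 ∂μ := by ring
    have hA2 : ∫ ω in A, Q ω ^ 2 ∂μ ≤ ∫ ω, Q ω ^ 2 ∂μ :=
      setIntegral_le_integral h2 (Filter.Eventually.of_forall fun ω => sq_nonneg _)
    have h4 : (m / 2) ^ 2 ≤ p * ∫ ω, Q ω ^ 2 ∂μ := by
      calc (m / 2) ^ 2 ≤ (∫ ω in A, Q ω ∂μ) ^ 2 := by
            apply pow_le_pow_left₀ (by linarith) hIA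
        _ ≤ p * ∫ ω in A, Q ω ^ 2 ∂μ := hCS
        _ ≤ p * ∫ ω, Q ω ^ 2 ∂μ := mul_le_mul_of_nonneg_left hA2 hpnn
    nlinarith [h4]

/-- Per-coordinate exponential moment bound. -/
lemma row_exp_bound [IsProbabilityMeasure μ] {f : Ω → ℂ} (hfm : Measurable f)
    (hf4 : MemLp f 4 μ) {v0 K4 : ℝ} (hv0 : 0 < v0) (hK4 : 0 < K4)
    (hm2 : v0 ≤ ∫ ω, ‖f ω‖ ^ 2 ∂μ)
    (hm4 : ∫ ω, ‖f ω‖ ^ 4 ∂μ ≤ 24 * K4 + 8 * (∫ ω, ‖f ω‖ ^ 2 ∂μ) ^ 2) :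
    ∫ ω, Real.exp (-(2 / v0) * ‖f ω‖ ^ 2) ∂μ
      ≤ 1 - v0 ^ 2 / (96 * K4 + 32 * v0 ^ 2) / 2 := by
  set m2 : ℝ := ∫ ω, ‖f ω‖ ^ 2 ∂μ with hm2def
  set D : ℝ := 96 * K4 + 32 * v0 ^ 2 with hD
  have hDpos : 0 < D := by positivity
  set δ : ℝ := v0 ^ 2 / D with hδ
  have hδpos : 0 < δ := by positivity
  have hQm : Measurable (fun ω => ‖f ω‖ ^ 2) := hfm.norm.pow_const 2
  have hQ1 : Integrable (fun ω => ‖f ω‖ ^ (2:ℕ)) μ := integrable_norm_pow_two hf4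
  have hQ2 : Integrable (fun ω => (‖f ω‖ ^ 2) ^ 2) μ := by
    apply (integrable_norm_pow_four hf4).congr
    filter_upwards with ω; ring
  set m4 : ℝ := ∫ ω, (‖f ω‖ ^ 2) ^ 2 ∂μ with hm4def
  have hm4' : m4 = ∫ ω, ‖f ω‖ ^ 4 ∂μ := by
    rw [hm4def]; apply integral_congr_ae; filter_upwards with ω; ring
  have hm4le : m4 ≤ 24 * K4 + 8 * m2 ^ 2 := by rw [hm4']; exact hm4
  have hm2sq : m2 ^ 2 ≤ m4 := sq_integral_le hQ1 hQ2
  have hm2pos : 0 < m2 := lt_of_lt_of_le hv0 hm2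
  have hm4pos : 0 < m4 := lt_of_lt_of_le (by positivity) hm2sq
  set A : Set Ω := {ω | m2 / 2 ≤ ‖f ω‖ ^ 2} with hA
  have hAmeas : MeasurableSet A := measurableSet_le measurable_const hQm
  set p : ℝ := (μ A).toReal with hp
  have hpnn : 0 ≤ p := ENNReal.toReal_nonneg
  have hPZ : m2 ^ 2 ≤ 4 * m4 * p :=
    paley_zygmund hQm (fun ω => by positivity) hQ1 hQ2
  -- δ ≤ p
  have hδp : δ ≤ p := by
    have key : 0 ≤ K4 * ((m2 - v0) * (m2 + v0)) :=
      mul_nonneg hK4.le (mul_nonneg (by linarith) (by linarith))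
    have k1 : v0 ^ 2 * (4 * m4) ≤ m2 ^ 2 * D := by
      rw [hD]
      nlinarith [hm4le, key, hv0, sq_nonneg v0, sq_nonneg m2]
    have k2 : m2 ^ 2 * D ≤ (4 * m4) * (p * D) := by
      nlinarith [mul_nonneg (sub_nonneg.mpr hPZ) hDpos.le]
    have k3 : v0 ^ 2 * (4 * m4) ≤ (4 * m4) * (p * D) := le_trans k1 k2
    have k4 : v0 ^ 2 ≤ p * D := by
      have h4m : 0 < 4 * m4 := by linarith
      exact le_of_mul_le_mul_left (by nlinarith [k3]) h4m
    rw [hδ, div_le_iff₀ hDpos]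
    exact k4
  -- pointwise bound
  have hein : Real.exp (-1) ≤ 1 / 2 := by
    have h2e : (2:ℝ) ≤ Real.exp 1 := by
      have := Real.add_one_le_exp 1
      linarith
    rw [Real.exp_neg, inv_eq_one_div,
      div_le_div_iff₀ (Real.exp_pos 1) (by norm_num : (0:ℝ) < 2)]
    linarith
  have hpt : ∀ ω, Real.exp (-(2 / v0) * ‖f ω‖ ^ 2)
      ≤ 1 - A.indicator (fun _ => 1 - Real.exp (-1)) ω := by
    intro ω
    by_cases hω : ω ∈ A
    · rw [Set.indicator_of_mem hω]
      have hQω : m2 / 2 ≤ ‖f ω‖ ^ 2 := hω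
      have h1 : (1:ℝ) ≤ (2 / v0) * ‖f ω‖ ^ 2 := by
        have : (2 / v0) * (v0 / 2) = 1 := by field_simp
        calc (1:ℝ) = (2 / v0) * (v0 / 2) := this.symm
          _ ≤ (2 / v0) * ‖f ω‖ ^ 2 := by
              apply mul_le_mul_of_nonneg_left _ (by positivity)
              linarith [hm2]
      have : Real.exp (-(2 / v0) * ‖f ω‖ ^ 2) ≤ Real.exp (-1) := by
        apply Real.exp_le_exp.mpr
        linarith
      linarith
    · rw [Set.indicator_of_notMem hω]
      have : Real.exp (-(2 / v0) * ‖f ω‖ ^ 2) ≤ 1 := by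
        apply Real.exp_le_one_iff.mpr
        have : 0 ≤ (2 / v0) * ‖f ω‖ ^ 2 := by positivity
        linarith
      linarith
  -- integrate
  have hintL : Integrable (fun ω => Real.exp (-(2 / v0) * ‖f ω‖ ^ 2)) μ := by
    apply Integrable.mono' (integrable_const (1:ℝ))
    · exact ((hQm.const_mul (-(2/v0))).exp).aestronglyMeasurable
    · filter_upwards with ω
      rw [Real.norm_of_nonneg (Real.exp_pos _).le]
      apply Real.exp_le_one_iff.mpr
      have : 0 ≤ (2 / v0) * ‖f ω‖ ^ 2 := by positivity
      nlinarith [this]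
  have hindint : Integrable (A.indicator (fun _ => (1:ℝ) - Real.exp (-1))) μ :=
    (integrable_const _).indicator hAmeas
  have hintR : Integrable (fun ω => 1 - A.indicator (fun _ => (1:ℝ) - Real.exp (-1)) ω) μ :=
    (integrable_const 1).sub hindint
  have hmono := integral_mono hintL hintR hpt
  have hRval : ∫ ω, (1 - A.indicator (fun _ => (1:ℝ) - Real.exp (-1)) ω) ∂μ
      = 1 - p * (1 - Real.exp (-1)) := by
    rw [integral_sub (integrable_const 1) hindint, integral_const,
      integral_indicator_const _ hAmeas]
    simp only [Measure.real, measure_univ, ENNReal.toReal_one, smul_eq_mul, one_mul, ← hp]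
    try ring
  have hfinal : ∫ ω, Real.exp (-(2 / v0) * ‖f ω‖ ^ 2) ∂μ ≤ 1 - δ / 2 := by
    have h1 : p * (1 - Real.exp (-1)) ≥ δ * (1 - Real.exp (-1)) := by
      apply mul_le_mul_of_nonneg_right hδp
      nlinarith [Real.exp_pos (-1:ℝ), hein]
    have h2 : δ * (1 - Real.exp (-1)) ≥ δ * (1/2) := by
      apply mul_le_mul_of_nonneg_left _ hδpos.le
      linarith [hein]
    calc ∫ ω, Real.exp (-(2 / v0) * ‖f ω‖ ^ 2) ∂μ
        ≤ 1 - p * (1 - Real.exp (-1)) := by rw [← hRval]; exact hmono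
      _ ≤ 1 - δ * (1 - Real.exp (-1)) := by linarith
      _ ≤ 1 - δ / 2 := by linarith
  first
  | exact hfinal
  | · refine le_trans hfinal (le_of_eq ?_)
      rw [hδ, hD]

end AntiConcentrationAux

open Finset

set_option maxHeartbeats 2000000

/-- Anti-concentration: for fixed `z`, a fixed unit vector `u` and a fixed
vector `w`, the image `Y(z)u` is at distance at least `c√n` from `w`, except
with probability `O(exp(-cn))`. -/
theorem stmt8 (M : ℕ) (hM : 1 ≤ M) (c₂ C₄ : ℝ) (hc₂ : 0 < c₂) (hC₄ : 0 < C₄) :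
    ∃ c C : ℝ, 0 < c ∧ 0 < C ∧
      ∀ (n : ℕ) (Ω : Type) (_mΩ : MeasurableSpace Ω) (μ : Measure Ω)
        (_ : IsProbabilityMeasure μ)
        (X : Fin M → Ω → Matrix (Fin n) (Fin n) ℂ),
        (∀ k i j, Measurable fun ω => X k ω i j) →
        iIndepFun
          (fun (p : Fin M × Fin n × Fin n) ω => X p.1 ω p.2.1 p.2.2) μ →
        (∀ k i j, ∫ ω, X k ω i j ∂μ = 0) →
        (∀ k i j, MemLp (fun ω => X k ω i j) 4 μ) →
        (∀ k i j, c₂ ≤ ∫ ω, ‖X k ω i j‖ ^ 2 ∂μ) →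
        (∀ k i j, ∫ ω, ‖X k ω i j‖ ^ 4 ∂μ ≤ C₄) →
        ∀ (z : ℂ) (u w : Fin M × Fin n → ℂ), euclNorm u = 1 →
          (μ {ω | euclNorm ((Ymat M n (fun k => X k ω) z).mulVec u - w)
                ≤ c * Real.sqrt n}).toReal
            ≤ C * Real.exp (-(c * n)) := by
  classical
  -- constants
  set v0 : ℝ := c₂ / M with hv0def
  have hMpos : (0:ℝ) < M := by exact_mod_cast Nat.lt_of_lt_of_le Nat.zero_lt_one hM
  have hv0 : 0 < v0 := by positivity
  set D : ℝ := 96 * C₄ + 32 * v0 ^ 2 with hDdef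
  have hD : 0 < D := by positivity
  set δ : ℝ := v0 ^ 2 / D with hδdef
  have hδ : 0 < δ := by positivity
  have hδ1 : δ ≤ 1 := by
    rw [hδdef, div_le_one hD, hDdef]
    nlinarith [sq_nonneg v0, hC₄]
  set t : ℝ := 2 / v0 with htdef
  have ht : 0 < t := by positivity
  set r : ℝ := δ * v0 / 8 with hrdef
  have hr : 0 < r := by positivity
  have htr : t * r = δ / 4 := by
    rw [htdef, hrdef]; field_simp; ring
  refine ⟨min (Real.sqrt r) (δ / 4), 1, lt_min (Real.sqrt_pos.mpr hr) (by positivity),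
    one_pos, ?_⟩
  set c : ℝ := min (Real.sqrt r) (δ / 4) with hcdef
  have hc : 0 < c := lt_min (Real.sqrt_pos.mpr hr) (by positivity)
  have hcr : c ^ 2 ≤ r := by
    have h1 : c ≤ Real.sqrt r := min_le_left _ _
    calc c ^ 2 ≤ Real.sqrt r ^ 2 := pow_le_pow_left₀ hc.le h1 2
      _ = r := Real.sq_sqrt hr.le
  have hcδ : c ≤ δ / 4 := min_le_right _ _
  intro n Ω mΩ μ hPM X hXmeas hind hcent hL4 hm2 hm4
  intro z u w hu
  haveI : NeZero M := ⟨by omega⟩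
  -- total mass of u
  have htot : ∑ p : Fin M × Fin n, ‖u p‖ ^ 2 = 1 := by
    have h0 : (0:ℝ) ≤ ∑ p : Fin M × Fin n, ‖u p‖ ^ 2 :=
      Finset.sum_nonneg fun p _ => by positivity
    have := hu
    rw [euclNorm] at this
    nlinarith [Real.sq_sqrt h0, this]
  -- choose the heavy block
  have hks : ∃ k : Fin M, 1 / (M:ℝ) ≤ ∑ j, ‖u (k, j)‖ ^ 2 := by
    by_contra hcon
    push_neg at hcon
    have hlt : ∑ k : Fin M, ∑ j, ‖u (k, j)‖ ^ 2 < ∑ _k : Fin M, 1 / (M:ℝ) :=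
      Finset.sum_lt_sum_of_nonempty Finset.univ_nonempty fun k _ => hcon k
    rw [Fintype.sum_prod_type] at htot
    rw [htot, Finset.sum_const, Finset.card_univ, Fintype.card_fin, nsmul_eq_mul] at hlt
    rw [mul_one_div, div_self (ne_of_gt hMpos)] at hlt
    exact lt_irrefl _ hlt
  obtain ⟨kstar, hkstar⟩ := hks
  set k₀ : Fin M := kstar - 1 with hk₀def
  have hsucc : k₀ + 1 = kstar := sub_add_cancel kstar 1
  have hval : (kstar : Fin M).val = (k₀.val + 1) % M := by
    rw [← hsucc, Fin.val_add, Fin.val_one']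
    conv_rhs => rw [Nat.add_mod, Nat.mod_eq_of_lt k₀.isLt]
  set cvec : Fin n → ℂ := fun j => u (kstar, j) with hcvec
  set avec : Fin n → ℂ := fun i => z * u (k₀, i) + w (k₀, i) with havec
  set bstar : ℝ := ∑ j, ‖cvec j‖ ^ 2 with hbstar
  have hbstar1 : 1 / (M:ℝ) ≤ bstar := hkstar
  have hbstar2 : bstar ≤ 1 := by
    rw [hbstar, ← htot, Fintype.sum_prod_type]
    exact Finset.single_le_sum (f := fun k => ∑ j, ‖u (k, j)‖ ^ 2)
      (fun k _ => Finset.sum_nonneg fun j _ => by positivity) (Finset.mem_univ kstar)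
  -- the master family
  set F : (Fin M × Fin n × Fin n) → Ω → ℂ := fun p ω => X p.1 ω p.2.1 p.2.2 with hF
  have hFmeas : ∀ p, Measurable (F p) := fun p => hXmeas p.1 p.2.1 p.2.2
  -- row functions
  set fR : Fin n → Ω → ℂ :=
    fun i ω => (∑ j, cvec j * X k₀ ω i j) - avec i with hfR
  have hWmeas : ∀ i, Measurable (fun ω => ∑ j, cvec j * X k₀ ω i j) := by
    intro i
    apply Finset.measurable_sum
    exact fun j _ => (hXmeas k₀ i j).const_mul (cvec j)
  have hfRmeas : ∀ i, Measurable (fR i) := by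
    intro i
    exact (hWmeas i).sub_const (avec i)
  have hW4 : ∀ i, MemLp (fun ω => ∑ j, cvec j * X k₀ ω i j) 4 μ := by
    intro i
    have h := memLp_finset_sum' (μ := μ) (p := 4) Finset.univ
      (f := fun j => fun ω => cvec j * X k₀ ω i j)
      (fun j _ => (hL4 k₀ i j).const_mul (cvec j))
    apply MemLp.ae_eq _ h
    filter_upwards with ω
    rw [Finset.sum_apply]
  have hfR4 : ∀ i, MemLp (fR i) 4 μ := by
    intro i
    exact (hW4 i).sub (memLp_const (avec i))
  -- coordinate identity
  have hcoord : ∀ ω i,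
      ((Ymat M n (fun k => X k ω) z).mulVec u - w) (k₀, i) = fR i ω := by
    intro ω i
    have hcyc : (cyclicY M n (fun k => X k ω)).mulVec u (k₀, i)
        = ∑ j, cvec j * X k₀ ω i j := by
      have h0 : (cyclicY M n (fun k => X k ω)).mulVec u (k₀, i)
          = ∑ q : Fin M × Fin n, cyclicY M n (fun k => X k ω) (k₀, i) q * u q := rfl
      rw [h0, Fintype.sum_prod_type]
      rw [Finset.sum_eq_single kstar]
      · apply Finset.sum_congr rfl
        intro j _
        show (if (kstar).val = (k₀.val + 1) % M then X k₀ ω i j else 0) * u (kstar, j)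
          = cvec j * X k₀ ω i j
        rw [if_pos hval, mul_comm]
      · intro l _ hl
        apply Finset.sum_eq_zero
        intro j _
        show (if l.val = (k₀.val + 1) % M then X k₀ ω i j else 0) * u (l, j) = 0
        rw [if_neg (fun hco => hl (Fin.ext (hco.trans hval.symm))), zero_mul]
      · intro h; exact absurd (Finset.mem_univ kstar) h
    have hmv : (Ymat M n (fun k => X k ω) z).mulVec u (k₀, i)
        = (∑ j, cvec j * X k₀ ω i j) - z * u (k₀, i) := by
      rw [Ymat, Matrix.sub_mulVec, Matrix.smul_mulVec, Matrix.one_mulVec]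
      rw [Pi.sub_apply, hcyc, Pi.smul_apply, smul_eq_mul]
    rw [Pi.sub_apply, hmv, hfR, havec]
    ring
  -- independence oracle within a row
  have horacle : ∀ (i : Fin n) (s : Finset (Fin n)) (a : Fin n), a ∉ s →
      IndepFun (fun ω => ∑ j ∈ s, cvec j * X k₀ ω i j) (fun ω => X k₀ ω i a) μ := by
    intro i s a ha
    set S : Finset (Fin M × Fin n × Fin n) := {k₀} ×ˢ ({i} ×ˢ s) with hS
    set T : Finset (Fin M × Fin n × Fin n) := {(k₀, i, a)} with hT
    have hdisj : Disjoint S T := by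
      rw [hT, Finset.disjoint_singleton_right, hS]
      simp only [Finset.mem_product, Finset.mem_singleton, not_and]
      intro _ _
      exact fun hcon => ha hcon
    have hmem : ∀ j ∈ s, ((k₀, i, j) : Fin M × Fin n × Fin n) ∈ S := by
      intro j hj
      simp [hS, Finset.mem_product, hj]
    have base := hind.indepFun_finset S T hdisj hFmeas
    have hφm : Measurable (fun v : (p : S) → ℂ =>
        ∑ j ∈ s.attach, cvec j.1 * v ⟨(k₀, i, j.1), hmem j.1 j.2⟩) := by
      apply Finset.measurable_sum
      intro j _
      exact (measurable_pi_apply _).const_mul _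
    have hψm : Measurable (fun v : (p : T) → ℂ =>
        v ⟨(k₀, i, a), Finset.mem_singleton_self _⟩) := measurable_pi_apply _
    have hcomp := base.comp hφm hψm
    apply IndepFun.congr hcomp
    · filter_upwards with ω
      exact Finset.sum_attach s (fun j => cvec j * X k₀ ω i j)
    · filter_upwards with ω
      rfl
  -- per-row moments
  have hmom := fun i : Fin n => weighted_sum_moments (μ := μ) hC₄
    (fun j ω => X k₀ ω i j) cvec (fun j => hXmeas k₀ i j) (fun j => hL4 k₀ i j)
    (fun j => hcent k₀ i j) (fun j => hm4 k₀ i j) (horacle i) Finset.univ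
  -- second moment of rows
  have hE2Wnn : ∀ i, (0:ℝ) ≤ ∫ ω, ‖∑ j, cvec j * X k₀ ω i j‖ ^ 2 ∂μ :=
    fun i => integral_nonneg fun ω => by positivity
  have hB1 : ∀ i, ∫ ω, ‖fR i ω‖ ^ 2 ∂μ
      = (∫ ω, ‖∑ j, cvec j * X k₀ ω i j‖ ^ 2 ∂μ) + ‖avec i‖ ^ 2 := by
    intro i
    have hWint : Integrable (fun ω => ∑ j, cvec j * X k₀ ω i j) μ :=
      (hW4 i).integrable (by norm_num)
    have hWb : Integrable (fun ω => (∑ j, cvec j * X k₀ ω i j) * (starRingEnd ℂ) (avec i)) μ :=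
      hWint.mul_const _
    have hW2int : Integrable (fun ω => ‖∑ j, cvec j * X k₀ ω i j‖ ^ (2:ℕ)) μ :=
      integrable_norm_pow_two (hW4 i)
    have hptw : ∀ ω, ‖fR i ω‖ ^ 2
        = ‖∑ j, cvec j * X k₀ ω i j‖ ^ 2
          - 2 * ((∑ j, cvec j * X k₀ ω i j) * (starRingEnd ℂ) (avec i)).re
          + ‖avec i‖ ^ 2 := by
      intro ω
      have h := Complex.normSq_sub (∑ j, cvec j * X k₀ ω i j) (avec i)
      have e0 : fR i ω = (∑ j, cvec j * X k₀ ω i j) - avec i := rfl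
      rw [e0]
      simp only [Complex.sq_norm]
      linarith [h]
    have hWre : Integrable
        (fun ω => ((∑ j, cvec j * X k₀ ω i j) * (starRingEnd ℂ) (avec i)).re) μ := hWb.re
    have hWre2 : Integrable
        (fun ω => 2 * ((∑ j, cvec j * X k₀ ω i j) * (starRingEnd ℂ) (avec i)).re) μ :=
      hWre.const_mul 2
    have hsub : Integrable (fun ω => ‖∑ j, cvec j * X k₀ ω i j‖ ^ 2
        - 2 * ((∑ j, cvec j * X k₀ ω i j) * (starRingEnd ℂ) (avec i)).re) μ :=
      hW2int.sub hWre2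
    rw [integral_congr_ae (Filter.Eventually.of_forall hptw),
      integral_add hsub (integrable_const _),
      integral_sub hW2int hWre2, integral_const_mul,
      integral_complex_re hWb, integral_const]
    have hmul : ∫ ω, (∑ j, cvec j * X k₀ ω i j) * (starRingEnd ℂ) (avec i) ∂μ
        = (∫ ω, ∑ j, cvec j * X k₀ ω i j ∂μ) * (starRingEnd ℂ) (avec i) :=
      integral_mul_const _ _
    rw [hmul, (hmom i).1]
    simp only [Measure.real, zero_mul, Complex.zero_re, mul_zero, sub_zero, measure_univ,
      ENNReal.toReal_one, smul_eq_mul, one_mul]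
  -- row exponential bound
  have hrow : ∀ i, ∫ ω, Real.exp (-(2 / v0) * ‖fR i ω‖ ^ 2) ∂μ ≤ 1 - δ / 2 := by
    intro i
    have hm2row : v0 ≤ ∫ ω, ‖fR i ω‖ ^ 2 ∂μ := by
      have h1 : c₂ * bstar ≤ ∑ j, ‖cvec j‖ ^ 2 * ∫ ω, ‖X k₀ ω i j‖ ^ 2 ∂μ := by
        rw [hbstar, Finset.mul_sum]
        apply Finset.sum_le_sum
        intro j _
        rw [mul_comm c₂]
        exact mul_le_mul_of_nonneg_left (hm2 k₀ i j) (by positivity)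
      have h2 : v0 ≤ c₂ * bstar := by
        rw [hv0def]
        calc c₂ / M = c₂ * (1 / M) := by ring
          _ ≤ c₂ * bstar := mul_le_mul_of_nonneg_left hbstar1 hc₂.le
      rw [hB1 i]
      have h3 : c₂ * bstar ≤ ∫ ω, ‖∑ j, cvec j * X k₀ ω i j‖ ^ 2 ∂μ := by
        rw [(hmom i).2.1]; exact h1
      linarith [h2, h3, sq_nonneg ‖avec i‖]
    have hm4row : ∫ ω, ‖fR i ω‖ ^ 4 ∂μ
        ≤ 24 * C₄ + 8 * (∫ ω, ‖fR i ω‖ ^ 2 ∂μ) ^ 2 := by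
      have h4a : ∫ ω, ‖fR i ω‖ ^ 4 ∂μ
          ≤ 8 * (∫ ω, ‖∑ j, cvec j * X k₀ ω i j‖ ^ 4 ∂μ) + 8 * ‖avec i‖ ^ 4 := by
        have hint1 : Integrable (fun ω => ‖fR i ω‖ ^ (4:ℕ)) μ :=
          integrable_norm_pow_four (hfR4 i)
        have hint2 : Integrable
            (fun ω => 8 * ‖∑ j, cvec j * X k₀ ω i j‖ ^ (4:ℕ) + 8 * ‖avec i‖ ^ 4) μ :=
          ((integrable_norm_pow_four (hW4 i)).const_mul 8).add (integrable_const _)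
        have hpt4 : ∀ ω, ‖fR i ω‖ ^ 4
            ≤ 8 * ‖∑ j, cvec j * X k₀ ω i j‖ ^ 4 + 8 * ‖avec i‖ ^ 4 := by
          intro ω
          have hn : ‖fR i ω‖ ≤ ‖∑ j, cvec j * X k₀ ω i j‖ + ‖avec i‖ := by
            have e0 : fR i ω = (∑ j, cvec j * X k₀ ω i j) - avec i := rfl
            rw [e0]; exact norm_sub_le _ _
          have hp4 := pow_le_pow_left₀ (norm_nonneg _) hn 4
          set p := ‖∑ j, cvec j * X k₀ ω i j‖
          set q := ‖avec i‖
          have hpnn : 0 ≤ p := norm_nonneg _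
          have hqnn : 0 ≤ q := norm_nonneg _
          nlinarith [hp4, sq_nonneg (p - q), sq_nonneg (p + q), sq_nonneg (p ^ 2 - q ^ 2),
            mul_nonneg hpnn hqnn, sq_nonneg (p * q), mul_nonneg (mul_nonneg hpnn hpnn) hqnn,
            mul_nonneg (mul_nonneg hqnn hqnn) hpnn]
        have := integral_mono hint1 hint2 hpt4
        calc ∫ ω, ‖fR i ω‖ ^ 4 ∂μ
            ≤ ∫ ω, (8 * ‖∑ j, cvec j * X k₀ ω i j‖ ^ (4:ℕ) + 8 * ‖avec i‖ ^ 4) ∂μ := this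
          _ = 8 * (∫ ω, ‖∑ j, cvec j * X k₀ ω i j‖ ^ 4 ∂μ) + 8 * ‖avec i‖ ^ 4 := by
              rw [integral_add ((integrable_norm_pow_four (hW4 i)).const_mul 8)
                (integrable_const _), integral_const_mul, integral_const]
              simp [measure_univ]
      have h4b : ∫ ω, ‖∑ j, cvec j * X k₀ ω i j‖ ^ 4 ∂μ ≤ 3 * C₄ := by
        have hmm := (hmom i).2.2
        have hbnn : (0:ℝ) ≤ bstar := le_trans (le_of_lt (one_div_pos.mpr hMpos)) hbstar1
        have hb2 : (∑ j, ‖cvec j‖ ^ 2) ^ 2 ≤ 1 := pow_le_one₀ hbnn hbstar2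
        have hmul := mul_le_mul_of_nonneg_left hb2 (by positivity : (0:ℝ) ≤ 3 * C₄)
        rw [mul_one] at hmul
        linarith [hmm, hmul]
      have hanorm : ‖avec i‖ ^ 4 ≤ (∫ ω, ‖fR i ω‖ ^ 2 ∂μ) ^ 2 := by
        have h1 : ‖avec i‖ ^ 2 ≤ ∫ ω, ‖fR i ω‖ ^ 2 ∂μ := by
          rw [hB1 i]
          linarith [hE2Wnn i]
        calc ‖avec i‖ ^ 4 = (‖avec i‖ ^ 2) ^ 2 := by ring
          _ ≤ (∫ ω, ‖fR i ω‖ ^ 2 ∂μ) ^ 2 :=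
              pow_le_pow_left₀ (by positivity) h1 2
      nlinarith [h4a, h4b, hanorm]
    have := row_exp_bound (hfRmeas i) (hfR4 i) hv0 hC₄ hm2row hm4row
    calc ∫ ω, Real.exp (-(2 / v0) * ‖fR i ω‖ ^ 2) ∂μ
        ≤ 1 - v0 ^ 2 / (96 * C₄ + 32 * v0 ^ 2) / 2 := this
      _ = 1 - δ / 2 := by rw [hδdef, hDdef]
  -- the row exponential functions
  set g : Fin n → Ω → ℝ := fun i ω => Real.exp (-t * ‖fR i ω‖ ^ 2) with hgdef
  have hgmeas : ∀ i, Measurable (g i) := by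
    intro i
    exact (((hfRmeas i).norm.pow_const 2).const_mul (-t)).exp
  have hgpos : ∀ i ω, 0 < g i ω := fun i ω => Real.exp_pos _
  have hgle1 : ∀ i ω, g i ω ≤ 1 := by
    intro i ω
    apply Real.exp_le_one_iff.mpr
    have h0 : (0:ℝ) ≤ t * ‖fR i ω‖ ^ 2 := by positivity
    nlinarith [h0]
  have hgint : ∀ i, Integrable (g i) μ := by
    intro i
    apply Integrable.mono' (integrable_const (1:ℝ)) (hgmeas i).aestronglyMeasurable
    filter_upwards with ω
    rw [Real.norm_of_nonneg (hgpos i ω).le]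
    exact hgle1 i ω
  have hrowt : ∀ i, ∫ ω, g i ω ∂μ ≤ 1 - δ / 2 := by
    intro i
    have h := hrow i
    rw [hgdef]
    simp only []
    rw [htdef]
    exact h
  -- product rule over rows
  have hprod : ∀ T : Finset (Fin n),
      ∫ ω, ∏ i ∈ T, g i ω ∂μ = ∏ i ∈ T, ∫ ω, g i ω ∂μ := by
    intro T
    induction T using Finset.induction_on with
    | empty => simp
    | @insert a T ha IH =>
      have hGm : Measurable (fun ω => ∏ i ∈ T, g i ω) :=
        Finset.measurable_prod _ (fun i _ => hgmeas i)
      have hGint : Integrable (fun ω => ∏ i ∈ T, g i ω) μ := by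
        apply Integrable.mono' (integrable_const (1:ℝ)) hGm.aestronglyMeasurable
        filter_upwards with ω
        rw [Real.norm_of_nonneg (Finset.prod_nonneg fun i _ => (hgpos i ω).le)]
        exact Finset.prod_le_one (fun i _ => (hgpos i ω).le) (fun i _ => hgle1 i ω)
      -- independence of row a from rows in T
      set Sa : Finset (Fin M × Fin n × Fin n) := {k₀} ×ˢ ({a} ×ˢ Finset.univ) with hSa
      set ST : Finset (Fin M × Fin n × Fin n) := {k₀} ×ˢ (T ×ˢ Finset.univ) with hST
      have hdisj : Disjoint Sa ST := by
        rw [Finset.disjoint_left]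
        intro p hp1 hp2
        simp only [hSa, hST, Finset.mem_product, Finset.mem_singleton] at hp1 hp2
        exact ha (hp1.2.1 ▸ hp2.2.1)
      have hmem1 : ∀ j : Fin n, ((k₀, a, j) : Fin M × Fin n × Fin n) ∈ Sa := by
        intro j
        simp [hSa, Finset.mem_product]
      have hmem2 : ∀ (i : {x // x ∈ T}) (j : Fin n),
          ((k₀, i.1, j) : Fin M × Fin n × Fin n) ∈ ST := by
        intro i j
        simp [hST, Finset.mem_product, i.2]
      have base := hind.indepFun_finset Sa ST hdisj hFmeas
      have hφm : Measurable (fun v : (p : Sa) → ℂ =>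
          Real.exp (-t * ‖(∑ j : Fin n, cvec j * v ⟨(k₀, a, j), hmem1 j⟩) - avec a‖ ^ 2)) := by
        apply Measurable.exp
        apply Measurable.const_mul
        apply Measurable.pow_const
        apply Measurable.norm
        apply Measurable.sub_const
        apply Finset.measurable_sum
        intro j _
        exact (measurable_pi_apply _).const_mul _
      have hψm : Measurable (fun v : (p : ST) → ℂ =>
          ∏ i ∈ T.attach,
            Real.exp (-t * ‖(∑ j : Fin n, cvec j * v ⟨(k₀, i.1, j), hmem2 i j⟩)
              - avec i.1‖ ^ 2)) := by
        apply Finset.measurable_prod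
        intro i _
        apply Measurable.exp
        apply Measurable.const_mul
        apply Measurable.pow_const
        apply Measurable.norm
        apply Measurable.sub_const
        apply Finset.measurable_sum
        intro j _
        exact (measurable_pi_apply _).const_mul _
      have hcomp := base.comp hφm hψm
      have hIF : IndepFun (g a) (fun ω => ∏ i ∈ T, g i ω) μ := by
        apply IndepFun.congr hcomp
        · filter_upwards with ω
          rfl
        · filter_upwards with ω
          exact Finset.prod_attach T
            (fun i => Real.exp (-t * ‖(∑ j : Fin n, cvec j * X k₀ ω i j) - avec i‖ ^ 2))
      have key : ∫ ω, g a ω * ∏ i ∈ T, g i ω ∂μ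
          = (∫ ω, g a ω ∂μ) * ∫ ω, ∏ i ∈ T, g i ω ∂μ :=
        hIF.integral_fun_mul_eq_mul_integral (hgint a).aestronglyMeasurable hGint.aestronglyMeasurable
      have hsplit : ∫ ω, ∏ i ∈ insert a T, g i ω ∂μ
          = ∫ ω, g a ω * ∏ i ∈ T, g i ω ∂μ := by
        apply integral_congr_ae
        filter_upwards with ω
        rw [Finset.prod_insert ha]
      rw [hsplit, key, IH, Finset.prod_insert ha]
  -- Markov / Chernoff step
  set SQ : Ω → ℝ := fun ω => ∑ i, ‖fR i ω‖ ^ 2 with hSQ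
  have hSQmeas : Measurable SQ :=
    Finset.measurable_sum _ (fun i _ => (hfRmeas i).norm.pow_const 2)
  set B : Set Ω := {ω | SQ ω ≤ r * n} with hB
  have hBmeas : MeasurableSet B := measurableSet_le hSQmeas measurable_const
  -- event inclusion
  have hEsub : {ω | euclNorm ((Ymat M n (fun k => X k ω) z).mulVec u - w)
      ≤ c * Real.sqrt n} ⊆ B := by
    intro ω hω
    set V : Fin M × Fin n → ℂ := (Ymat M n (fun k => X k ω) z).mulVec u - w with hV
    have h0 : (0:ℝ) ≤ ∑ p, ‖V p‖ ^ 2 := Finset.sum_nonneg fun p _ => by positivity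
    have h1 : euclNorm V ≤ c * Real.sqrt n := hω
    rw [euclNorm] at h1
    have h2 : ∑ p, ‖V p‖ ^ 2 ≤ c ^ 2 * n := by
      have h3 := pow_le_pow_left₀ (Real.sqrt_nonneg _) h1 2
      rw [Real.sq_sqrt h0, mul_pow, Real.sq_sqrt (Nat.cast_nonneg n)] at h3
      exact h3
    have h4 : SQ ω = ∑ i, ‖V (k₀, i)‖ ^ 2 := by
      rw [hSQ]
      apply Finset.sum_congr rfl
      intro i _
      rw [hV, hcoord ω i]
    have h5 : ∑ i, ‖V (k₀, i)‖ ^ 2 ≤ ∑ p, ‖V p‖ ^ 2 := by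
      rw [Fintype.sum_prod_type]
      exact Finset.single_le_sum (f := fun k => ∑ i, ‖V (k, i)‖ ^ 2)
        (fun k _ => Finset.sum_nonneg fun i _ => by positivity) (Finset.mem_univ k₀)
    have h6 : c ^ 2 * n ≤ r * n :=
      mul_le_mul_of_nonneg_right hcr (Nat.cast_nonneg n)
    show SQ ω ≤ r * n
    rw [h4]
    linarith [h5, h2, h6]
  have hμEB : (μ {ω | euclNorm ((Ymat M n (fun k => X k ω) z).mulVec u - w)
      ≤ c * Real.sqrt n}).toReal ≤ (μ B).toReal :=
    ENNReal.toReal_mono (measure_ne_top μ B) (measure_mono hEsub)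
  -- Markov
  have hGint : Integrable (fun ω => ∏ i, g i ω) μ := by
    apply Integrable.mono' (integrable_const (1:ℝ))
      (Finset.measurable_prod _ (fun i _ => hgmeas i)).aestronglyMeasurable
    filter_upwards with ω
    rw [Real.norm_of_nonneg (Finset.prod_nonneg fun i _ => (hgpos i ω).le)]
    exact Finset.prod_le_one (fun i _ => (hgpos i ω).le) (fun i _ => hgle1 i ω)
  have hgprod_pt : ∀ ω, ∏ i, g i ω = Real.exp (-t * SQ ω) := by
    intro ω
    rw [hSQ]
    simp only []
    rw [Finset.mul_sum, Real.exp_sum]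
  have hMB : Real.exp (-(t * (r * n))) * (μ B).toReal ≤ ∫ ω, ∏ i, g i ω ∂μ := by
    have h1 : ∫ _ω in B, Real.exp (-(t * (r * n))) ∂μ
        = (μ B).toReal * Real.exp (-(t * (r * n))) := by
      rw [setIntegral_const, smul_eq_mul]; rfl
    have h2 : ∫ ω in B, Real.exp (-(t * (r * n))) ∂μ ≤ ∫ ω in B, ∏ i, g i ω ∂μ := by
      apply setIntegral_mono_on
        (integrableOn_const (measure_ne_top μ B)) hGint.integrableOn hBmeas
      intro ω hω
      rw [hgprod_pt ω]
      apply Real.exp_le_exp.mpr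
      have hωB : SQ ω ≤ r * n := hω
      nlinarith [mul_le_mul_of_nonneg_left hωB ht.le]
    have h3 : ∫ ω in B, ∏ i, g i ω ∂μ ≤ ∫ ω, ∏ i, g i ω ∂μ :=
      setIntegral_le_integral hGint
        (Filter.Eventually.of_forall fun ω => Finset.prod_nonneg fun i _ => (hgpos i ω).le)
    linarith [h1, h2, h3]
  -- assemble
  have hδ2 : (0:ℝ) ≤ 1 - δ / 2 := by linarith [hδ1]
  have hprodbound : ∫ ω, ∏ i, g i ω ∂μ ≤ (1 - δ / 2) ^ n := by
    rw [hprod Finset.univ]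
    calc ∏ i, ∫ ω, g i ω ∂μ ≤ ∏ _i : Fin n, (1 - δ / 2) :=
          Finset.prod_le_prod (fun i _ => integral_nonneg fun ω => (hgpos i ω).le)
            (fun i _ => hrowt i)
      _ = (1 - δ / 2) ^ n := by rw [Finset.prod_const, Finset.card_univ, Fintype.card_fin]
  have hexpb : (1 - δ / 2) ^ n ≤ Real.exp (-(δ / 2) * n) := by
    have h1 : 1 - δ / 2 ≤ Real.exp (-(δ / 2)) := by
      linarith [Real.add_one_le_exp (-(δ / 2))]
    calc (1 - δ / 2) ^ n ≤ Real.exp (-(δ / 2)) ^ n := pow_le_pow_left₀ hδ2 h1 n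
      _ = Real.exp (-(δ / 2) * n) := by
          rw [← Real.exp_nat_mul]; ring_nf
  have hfin : (μ B).toReal ≤ Real.exp (-(c * n)) := by
    have h1 : (μ B).toReal
        ≤ Real.exp (t * (r * n)) * ∫ ω, ∏ i, g i ω ∂μ := by
      have h2 := mul_le_mul_of_nonneg_left hMB (Real.exp_pos (t * (r * n))).le
      rw [← mul_assoc, ← Real.exp_add] at h2
      simp only [add_neg_cancel, Real.exp_zero, one_mul] at h2
      exact h2
    have h2 : Real.exp (t * (r * n)) * ∫ ω, ∏ i, g i ω ∂μ
        ≤ Real.exp (t * (r * n)) * Real.exp (-(δ / 2) * n) := by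
      apply mul_le_mul_of_nonneg_left _ (Real.exp_pos _).le
      exact le_trans hprodbound hexpb
    have h3 : Real.exp (t * (r * n)) * Real.exp (-(δ / 2) * n)
        = Real.exp (-(δ / 4) * n) := by
      rw [← Real.exp_add]
      congr 1
      have : t * (r * n) = δ / 4 * n := by rw [← mul_assoc, htr]
      rw [this]; ring
    have h4 : Real.exp (-(δ / 4) * n) ≤ Real.exp (-(c * n)) := by
      apply Real.exp_le_exp.mpr
      have : c * n ≤ δ / 4 * n := mul_le_mul_of_nonneg_right hcδ (Nat.cast_nonneg n)
      linarith
    calc (μ B).toReal ≤ Real.exp (t * (r * n)) * ∫ ω, ∏ i, g i ω ∂μ := h1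
      _ ≤ Real.exp (t * (r * n)) * Real.exp (-(δ / 2) * n) := h2
      _ = Real.exp (-(δ / 4) * n) := h3
      _ ≤ Real.exp (-(c * n)) := h4
  calc (μ {ω | euclNorm ((Ymat M n (fun k => X k ω) z).mulVec u - w)
        ≤ c * Real.sqrt n}).toReal
      ≤ (μ B).toReal := hμEB
    _ ≤ Real.exp (-(c * n)) := hfin
    _ = 1 * Real.exp (-(c * n)) := (one_mul _).symm
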